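/- Define, for 2/3 < t < 1, f₃(t) := (1/2)(1 − log(π V/2)) − (1/V)·( ∫_0^{V/2} log l(x) dx − 3 ∫_{t−V/2}^{t} log l(x) dx ), where V := 3t − 2 and l(x) := Γ(x)/Γ(1−x). Then lim_{t→(2/3)⁺} f₃(t) = −(1/2) log π + (3/2) log( Γ(2/3)/Γ(1/3) ). -/

import Mathlib

open Filter

noncomputable def l (x : ℝ) : ℝ := Real.Gamma x / Real.Gamma (1 - x)

/-- The normalized canonical height of the log pair on `P¹_ℤ` with weights `(t,t,t)`. -/
noncomputable def fthree (t : ℝ) : ℝ :=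
  (1 / 2) * (1 - Real.log (Real.pi * (3 * t - 2) / 2))
    - (1 / (3 * t - 2)) *
        ((∫ x in (0 : ℝ)..((3 * t - 2) / 2), Real.log (l x))
          - 3 * ∫ x in (t - (3 * t - 2) / 2)..t, Real.log (l x))


noncomputable def Gaux (x : ℝ) : ℝ :=
  Real.log (Real.Gamma (1 + x)) - Real.log (Real.Gamma (1 - x))

lemma contGamma {x : ℝ} (hx : 0 < x) : ContinuousAt Real.Gamma x :=
  (Real.differentiableAt_Gamma fun m =>
    ((neg_nonpos.mpr (Nat.cast_nonneg m)).trans_lt hx).ne').continuousAt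

lemma contlogl {x : ℝ} (h0 : 0 < x) (h1 : x < 1) :
    ContinuousAt (fun y => Real.log (l y)) x := by
  have hg2 : ContinuousAt (fun y : ℝ => Real.Gamma (1 - y)) x :=
    (contGamma (by linarith)).comp (continuousAt_const.sub continuousAt_id)
  have hpos1 := Real.Gamma_pos_of_pos h0
  have hpos2 := Real.Gamma_pos_of_pos (by linarith : (0:ℝ) < 1 - x)
  exact (((contGamma h0).div hg2 hpos2.ne').log (div_pos hpos1 hpos2).ne')

lemma contGaux {x : ℝ} (h : x ∈ Set.Ioo (-(1:ℝ)/2) (1/2)) : ContinuousAt Gaux x := by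
  obtain ⟨h1, h2⟩ := h
  have hc1 : ContinuousAt (fun y : ℝ => Real.Gamma (1 + y)) x :=
    (contGamma (by linarith)).comp (continuousAt_const.add continuousAt_id)
  have hc2 : ContinuousAt (fun y : ℝ => Real.Gamma (1 - y)) x :=
    (contGamma (by linarith)).comp (continuousAt_const.sub continuousAt_id)
  exact (hc1.log (Real.Gamma_pos_of_pos (by linarith)).ne').sub
    (hc2.log (Real.Gamma_pos_of_pos (by linarith)).ne')

lemma negLog_intervalIntegrable {s : ℝ} (h0 : 0 < s) (h1 : s ≤ 1) :
    IntervalIntegrable (fun x => -Real.log x) MeasureTheory.volume 0 s := by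
  have hcont : ContinuousOn (fun x : ℝ => x - x * Real.log x) (Set.Icc 0 s) :=
    (continuous_id.sub Real.continuous_mul_log).continuousOn
  have hderiv : ∀ x ∈ Set.Ioo (0:ℝ) s,
      HasDerivAt (fun x : ℝ => x - x * Real.log x) (-Real.log x) x := by
    intro x hx
    have : HasDerivAt (fun x : ℝ => x - x * Real.log x) (1 - (Real.log x + 1)) x :=
      (hasDerivAt_id x).sub (Real.hasDerivAt_mul_log hx.1.ne')
    convert this using 1
    ring
  have hpos : ∀ x ∈ Set.Ioo (0:ℝ) s, 0 ≤ -Real.log x := fun x hx =>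
    neg_nonneg.mpr (Real.log_nonpos hx.1.le (hx.2.le.trans h1))
  have := intervalIntegral.integrableOn_deriv_of_nonneg hcont hderiv hpos
  rw [intervalIntegrable_iff_integrableOn_Ioc_of_le h0.le]
  exact this

lemma negLog_integral {s : ℝ} (h0 : 0 < s) (h1 : s ≤ 1) :
    ∫ x in (0:ℝ)..s, -Real.log x = s - s * Real.log s := by
  have hcont : ContinuousOn (fun x : ℝ => x - x * Real.log x) (Set.Icc 0 s) :=
    (continuous_id.sub Real.continuous_mul_log).continuousOn
  have hderiv : ∀ x ∈ Set.Ioo (0:ℝ) s,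
      HasDerivAt (fun x : ℝ => x - x * Real.log x) (-Real.log x) x := by
    intro x hx
    have : HasDerivAt (fun x : ℝ => x - x * Real.log x) (1 - (Real.log x + 1)) x :=
      (hasDerivAt_id x).sub (Real.hasDerivAt_mul_log hx.1.ne')
    convert this using 1
    ring
  have := intervalIntegral.integral_eq_sub_of_hasDeriv_right_of_le h0.le hcont
    (fun x hx => (hderiv x hx).hasDerivWithinAt) (negLog_intervalIntegrable h0 h1)
  simpa using this

lemma tendsto_avg {F : ℝ → ℝ} {d c : ℝ} (hF : HasStrictDerivAt F d c)
    {a b : ℝ → ℝ} (ha : Tendsto a (nhdsWithin (2/3 : ℝ) (Set.Ioi (2/3))) (nhds c))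
    (hb : Tendsto b (nhdsWithin (2/3 : ℝ) (Set.Ioi (2/3))) (nhds c))
    (hab : ∀ᶠ t in nhdsWithin (2/3 : ℝ) (Set.Ioi (2/3)), b t - a t = (3*t-2)/2) :
    Tendsto (fun t => (F (b t) - F (a t)) / (3*t-2))
      (nhdsWithin (2/3 : ℝ) (Set.Ioi (2/3))) (nhds (d/2)) := by
  have hV : ∀ᶠ t in nhdsWithin (2/3 : ℝ) (Set.Ioi (2/3)), (0:ℝ) < 3*t-2 := by
    filter_upwards [self_mem_nhdsWithin] with t ht
    simp only [Set.mem_Ioi] at ht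
    linarith
  have h0 := hF.hasStrictFDerivAt.isLittleO
  simp only [ContinuousLinearMap.smulRight_apply, ContinuousLinearMap.one_apply,
    ContinuousLinearMap.toSpanSingleton_apply, smul_eq_mul] at h0
  have h1 := h0.comp_tendsto (hb.prodMk_nhds ha)
  simp only [Function.comp_def] at h1
  have h2 : (fun t => F (b t) - F (a t) - (3*t-2)/2 * d) =o[nhdsWithin (2/3 : ℝ) (Set.Ioi (2/3))]
      fun t => (3*t-2)/2 := by
    refine h1.congr' ?_ ?_
    · filter_upwards [hab] with t h
      rw [h]
    · filter_upwards [hab] with t h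
      rw [h]
  have h3 := h2.tendsto_div_nhds_zero
  have h4 : Tendsto (fun t => (F (b t) - F (a t) - (3*t-2)/2 * d) / ((3*t-2)/2) * (1/2) + d/2)
      (nhdsWithin (2/3 : ℝ) (Set.Ioi (2/3))) (nhds (0 * (1/2) + d/2)) :=
    (h3.mul_const _).add tendsto_const_nhds
  rw [zero_mul, zero_add] at h4
  refine h4.congr' ?_
  filter_upwards [hV] with t ht
  have hne : (3*t-2) ≠ 0 := ht.ne'
  field_simp
  ring

theorem fthree_limit_at_log_calabi_yau :
    Tendsto fthree (nhdsWithin (2 / 3) (Set.Ioi (2 / 3)))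
      (nhds (-(1 / 2) * Real.log Real.pi
        + (3 / 2) * Real.log (Real.Gamma (2 / 3) / Real.Gamma (1 / 3)))) := by
  have hmem : Set.Ioo (2/3:ℝ) (7/10) ∈ nhdsWithin (2/3:ℝ) (Set.Ioi (2/3)) :=
    Ioo_mem_nhdsGT_of_mem (by norm_num)
  -- continuity package for log ∘ l on (0,1)
  have hclO : ContinuousOn (fun y => Real.log (l y)) (Set.Ioo (0:ℝ) 1) :=
    fun x hx => (contlogl hx.1 hx.2).continuousWithinAt
  have hmeasl : StronglyMeasurableAtFilter
      (fun y => Real.log (l y)) (nhds (2/3 : ℝ)) MeasureTheory.volume :=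
    hclO.stronglyMeasurableAtFilter isOpen_Ioo (2/3) (by norm_num)
  have hmeasG : StronglyMeasurableAtFilter Gaux (nhds (0 : ℝ))
      MeasureTheory.volume :=
    ContinuousOn.stronglyMeasurableAtFilter isOpen_Ioo
      (fun x hx => (contGaux hx).continuousWithinAt) 0 (by norm_num)
  -- FTC strict derivatives
  set F : ℝ → ℝ := fun u => ∫ x in (2/3:ℝ)..u, Real.log (l x) with hF
  set F2 : ℝ → ℝ := fun u => ∫ x in (0:ℝ)..u, Gaux x with hF2
  have hFd : HasStrictDerivAt F (Real.log (l (2/3))) (2/3) :=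
    intervalIntegral.integral_hasStrictDerivAt_right IntervalIntegrable.refl hmeasl
      (contlogl (by norm_num) (by norm_num))
  have hG0 : Gaux 0 = 0 := by simp [Gaux]
  have hF2d : HasStrictDerivAt F2 0 0 := by
    have := intervalIntegral.integral_hasStrictDerivAt_right
      (IntervalIntegrable.refl (f := Gaux) (μ := MeasureTheory.volume) (a := 0)) hmeasG
      (contGaux (by norm_num))
    rwa [hG0] at this
  -- two averaged limits
  have ha1 : Tendsto (fun t : ℝ => (2 - t)/2) (nhdsWithin (2/3:ℝ) (Set.Ioi (2/3)))
      (nhds (2/3)) := by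
    have : Tendsto (fun t : ℝ => (2 - t)/2) (nhds (2/3:ℝ)) (nhds ((2 - 2/3)/2)) :=
      (Continuous.tendsto (by continuity) _)
    norm_num at this
    exact this.mono_left nhdsWithin_le_nhds
  have hb1 : Tendsto (fun t : ℝ => t) (nhdsWithin (2/3:ℝ) (Set.Ioi (2/3))) (nhds (2/3)) :=
    tendsto_id.mono_left nhdsWithin_le_nhds
  have h3 : Tendsto (fun t => (F t - F ((2 - t)/2)) / (3*t-2))
      (nhdsWithin (2/3:ℝ) (Set.Ioi (2/3))) (nhds (Real.log (l (2/3)) / 2)) :=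
    tendsto_avg hFd ha1 hb1 (Eventually.of_forall fun t => by ring)
  have hb2 : Tendsto (fun t : ℝ => (3*t-2)/2) (nhdsWithin (2/3:ℝ) (Set.Ioi (2/3)))
      (nhds 0) := by
    have : Tendsto (fun t : ℝ => (3*t-2)/2) (nhds (2/3:ℝ)) (nhds ((3*(2/3)-2)/2)) :=
      (Continuous.tendsto (by continuity) _)
    norm_num at this
    exact this.mono_left nhdsWithin_le_nhds
  have h4 : Tendsto (fun t => (F2 ((3*t-2)/2) - F2 0) / (3*t-2))
      (nhdsWithin (2/3:ℝ) (Set.Ioi (2/3))) (nhds (0 / 2)) :=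
    tendsto_avg hF2d (a := fun _ => 0) tendsto_const_nhds hb2
      (Eventually.of_forall fun t => by ring)
  have hF20 : F2 0 = 0 := intervalIntegral.integral_same
  -- combined limit
  have hcomb : Tendsto
      (fun t => -(1/2) * Real.log Real.pi - (F2 ((3*t-2)/2) - F2 0) / (3*t-2)
        + 3 * ((F t - F ((2 - t)/2)) / (3*t-2)))
      (nhdsWithin (2/3:ℝ) (Set.Ioi (2/3)))
      (nhds (-(1/2) * Real.log Real.pi - 0/2 + 3 * (Real.log (l (2/3)) / 2))) :=
    (tendsto_const_nhds.sub h4).add (h3.const_mul 3)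
  have hval : -(1/2) * Real.log Real.pi - 0/2 + 3 * (Real.log (l (2/3)) / 2)
      = -(1 / 2) * Real.log Real.pi
        + (3 / 2) * Real.log (Real.Gamma (2 / 3) / Real.Gamma (1 / 3)) := by
    have : l (2/3 : ℝ) = Real.Gamma (2/3) / Real.Gamma (1/3) := by
      rw [l]; norm_num
    rw [this]; ring
  rw [hval] at hcomb
  -- eventual equality with fthree
  refine hcomb.congr' ?_
  filter_upwards [hmem] with t ht
  obtain ⟨ht1, ht2⟩ := ht
  have hV : (0:ℝ) < 3*t-2 := by linarith
  have hs0 : (0:ℝ) < (3*t-2)/2 := by linarith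
  have hs1 : (3*t-2)/2 ≤ 1 := by linarith
  -- rewrite second integral
  have hintl : ∀ u v : ℝ, (13:ℝ)/20 ≤ u → u ≤ v → v ≤ 7/10 →
      IntervalIntegrable (fun y => Real.log (l y)) MeasureTheory.volume u v := by
    intro u v hu huv hv
    apply ContinuousOn.intervalIntegrable
    apply hclO.mono
    rw [Set.uIcc_of_le huv]
    intro x hx
    exact ⟨by linarith [hx.1], by linarith [hx.2]⟩
  have hsub : F t - F ((2 - t)/2) = ∫ x in ((2 - t)/2)..t, Real.log (l x) := by
    rw [hF]
    exact intervalIntegral.integral_interval_sub_left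
      (hintl (2/3) t (by norm_num) ht1.le ht2.le)
      ((hintl ((2 - t)/2) (2/3) (by linarith) (by linarith) (by norm_num)).symm)
  -- split the first integral
  have heqOn : Set.EqOn (fun x => Real.log (l x)) (fun x => -Real.log x + Gaux x)
      (Set.uIcc (0:ℝ) ((3*t-2)/2)) := by
    rw [Set.uIcc_of_le hs0.le]
    intro x hx
    rcases eq_or_lt_of_le hx.1 with h | h
    · simp [← h, l, Gaux, Real.Gamma_zero, Real.Gamma_one]
    · have hx1 : x < 1 := by linarith [hx.2]
      have hg1 := Real.Gamma_pos_of_pos h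
      have hg2 := Real.Gamma_pos_of_pos (by linarith : (0:ℝ) < 1 - x)
      have hadd : Real.Gamma (1 + x) = x * Real.Gamma x := by
        rw [add_comm]; exact Real.Gamma_add_one h.ne'
      simp only [l, Gaux]
      rw [Real.log_div hg1.ne' hg2.ne', hadd, Real.log_mul h.ne' hg1.ne']
      ring
  have hGint : IntervalIntegrable Gaux MeasureTheory.volume 0 ((3*t-2)/2) := by
    apply ContinuousOn.intervalIntegrable
    intro x hx
    rw [Set.uIcc_of_le hs0.le] at hx
    exact (contGaux ⟨by linarith [hx.1], by linarith [hx.2]⟩).continuousWithinAt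
  have hsplit : (∫ x in (0:ℝ)..((3*t-2)/2), Real.log (l x))
      = ((3*t-2)/2 - (3*t-2)/2 * Real.log ((3*t-2)/2)) + F2 ((3*t-2)/2) := by
    rw [intervalIntegral.integral_congr heqOn,
      intervalIntegral.integral_add (negLog_intervalIntegrable hs0 hs1) hGint,
      negLog_integral hs0 hs1, hF2]
  -- final arithmetic
  show _ = fthree t
  rw [fthree, hsplit, show t - (3*t-2)/2 = (2-t)/2 from by ring, ← hsub, hF20]
  have hlog : Real.log (Real.pi * (3*t-2) / 2)
      = Real.log Real.pi + Real.log ((3*t-2)/2) := by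
    rw [mul_div_assoc, Real.log_mul Real.pi_ne_zero hs0.ne']
  rw [hlog]
  field_simp
  ring
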